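/- Let K be a field, m ≥ 2, and let a_1 > a_2 > … > a_m = 0 and 0 = b_1 < b_2 < … < b_m be integer sequences, and let I ⊂ K[x,y] be the monomial ideal whose minimal monomial generators are u_i = x^{a_i} y^{b_i} for i = 1,…,m. Suppose that the sequences (a_i) and (b_i) are either both convex (2c_i ≥ c_{i−1} + c_{i+1} for all 2 ≤ i ≤ m−1) or both concave (2c_i ≤ c_{i−1} + c_{i+1} for all 2 ≤ i ≤ m−1). Then μ(I^2) = 2μ(I) − 1; more precisely, if both sequences are concave then the minimal monomial generating set of I^2 is {u_1^2, …, u_m^2, u_1u_2, u_2u_3, …, u_{m−1}u_m}, and if both are convex it is {u_1^2, u_1u_2, …, u_1u_m, u_2u_m, …, u_m^2}. -/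

import Mathlib

open MvPolynomial

/-- The minimal number of generators of an ideal. -/
noncomputable def mu {R : Type*} [CommRing R] (I : Ideal R) : ℕ :=
  sInf {m : ℕ | ∃ s : Finset R, s.card = m ∧ Ideal.span (s : Set R) = I}

/-- The set of minimal monomial generators of a monomial ideal (as polynomials): the monomials
in `I` none of whose proper monomial divisors lies in `I`. -/
def MinMonGenSet {K : Type*} [Field K] {n : ℕ} (I : Ideal (MvPolynomial (Fin n) K)) :
    Set (MvPolynomial (Fin n) K) :=
  {p | ∃ v : Fin n →₀ ℕ, p = monomial v (1 : K) ∧ monomial v (1 : K) ∈ I ∧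
    ∀ w : Fin n →₀ ℕ, w ≤ v → w ≠ v → monomial w (1 : K) ∉ I}


/-- `sgl p q` is the exponent vector `(p, q)` in `Fin 2 →₀ ℕ`. -/
noncomputable def sgl (p q : ℕ) : Fin 2 →₀ ℕ := Finsupp.single 0 p + Finsupp.single 1 q

lemma sgl_apply0 (p q : ℕ) : sgl p q 0 = p := by
  simp [sgl, Finsupp.single_apply]

lemma sgl_apply1 (p q : ℕ) : sgl p q 1 = q := by
  simp [sgl, Finsupp.single_apply]

lemma sgl_le_iff {p q p' q' : ℕ} : sgl p q ≤ sgl p' q' ↔ p ≤ p' ∧ q ≤ q' := by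
  constructor
  · intro h
    rw [Finsupp.le_def] at h
    exact ⟨by simpa [sgl_apply0] using h 0, by simpa [sgl_apply1] using h 1⟩
  · rintro ⟨h1, h2⟩
    rw [Finsupp.le_def]
    intro i
    fin_cases i
    · simpa [sgl_apply0] using h1
    · simpa [sgl_apply1] using h2

lemma sgl_add (p q p' q' : ℕ) : sgl p q + sgl p' q' = sgl (p + p') (q + q') := by
  simp only [sgl, Finsupp.single_add]
  abel

lemma sgl_inj {p q p' q' : ℕ} (h : sgl p q = sgl p' q') : p = p' ∧ q = q' := by
  constructor
  · have := congrArg (fun f : Fin 2 →₀ ℕ => f 0) h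
    simpa [sgl_apply0] using this
  · have := congrArg (fun f : Fin 2 →₀ ℕ => f 1) h
    simpa [sgl_apply1] using this

lemma strictAnti_of_adj {f : ℕ → ℕ} {lo hi : ℕ} (h : ∀ i, lo ≤ i → i < hi → f (i+1) < f i) :
    ∀ i j, lo ≤ i → i < j → j ≤ hi → f j < f i := by
  intro i j hlo hij hjhi
  induction j, hij using Nat.le_induction with
  | base => exact h i hlo (by omega)
  | succ j hij IH => exact lt_trans (h j (by omega) (by omega)) (IH (by omega))

lemma strictMono_of_adj {f : ℕ → ℕ} {lo hi : ℕ} (h : ∀ i, lo ≤ i → i < hi → f i < f (i+1)) :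
    ∀ i j, lo ≤ i → i < j → j ≤ hi → f i < f j := by
  intro i j hlo hij hjhi
  induction j, hij using Nat.le_induction with
  | base => exact h i hlo (by omega)
  | succ j hij IH => exact lt_trans (IH (by omega)) (h j (by omega) (by omega))

/-- convex case: differences are nondecreasing. -/
lemma diff_mono {c : ℕ → ℕ} {m : ℕ}
    (h : ∀ i, 2 ≤ i → i + 1 ≤ m → 2 * c i ≤ c (i-1) + c (i+1)) :
    ∀ i j, 1 ≤ i → i ≤ j → j + 1 ≤ m → c (i+1) + c j ≤ c i + c (j+1) := by
  intro i j h1 hij hjm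
  induction j, hij using Nat.le_induction with
  | base => omega
  | succ j hij IH =>
    have h2 := h (j+1) (by omega) (by omega)
    simp only [Nat.add_sub_cancel] at h2
    have h3 := IH (by omega)
    omega

/-- concave case: differences are nonincreasing. -/
lemma diff_anti {c : ℕ → ℕ} {m : ℕ}
    (h : ∀ i, 2 ≤ i → i + 1 ≤ m → c (i-1) + c (i+1) ≤ 2 * c i) :
    ∀ i j, 1 ≤ i → i ≤ j → j + 1 ≤ m → c i + c (j+1) ≤ c (i+1) + c j := by
  intro i j h1 hij hjm
  induction j, hij using Nat.le_induction with
  | base => omega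
  | succ j hij IH =>
    have h2 := h (j+1) (by omega) (by omega)
    simp only [Nat.add_sub_cancel] at h2
    have h3 := IH (by omega)
    omega

lemma cvx_pair {a b : ℕ → ℕ} {m : ℕ}
    (Da : ∀ i j, 1 ≤ i → i ≤ j → j + 1 ≤ m → a (i+1) + a j ≤ a i + a (j+1))
    (Db : ∀ i j, 1 ≤ i → i ≤ j → j + 1 ≤ m → b (i+1) + b j ≤ b i + b (j+1)) :
    ∀ (n i j : ℕ), 1 ≤ i → i ≤ j → j ≤ m → j ≤ i + n →
      ∃ k l, 1 ≤ k ∧ k ≤ l ∧ l ≤ m ∧ l ≤ k + 1 ∧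
        a k + a l ≤ a i + a j ∧ b k + b l ≤ b i + b j := by
  intro n
  induction n with
  | zero =>
    intro i j h1 hij hjm hn
    exact ⟨i, j, h1, hij, hjm, by omega, le_refl _, le_refl _⟩
  | succ n IH =>
    intro i j h1 hij hjm hn
    by_cases hd : j ≤ i + 1
    · exact ⟨i, j, h1, hij, hjm, hd, le_refl _, le_refl _⟩
    · obtain ⟨k, l, hk1, hkl, hlm, hlk, hha, hhb⟩ :=
        IH (i+1) (j-1) (by omega) (by omega) (by omega) (by omega)
      have hj : j - 1 + 1 = j := by omega
      have sa : a (i+1) + a (j-1) ≤ a i + a j := by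
        have := Da i (j-1) h1 (by omega) (by omega)
        rwa [hj] at this
      have sb : b (i+1) + b (j-1) ≤ b i + b j := by
        have := Db i (j-1) h1 (by omega) (by omega)
        rwa [hj] at this
      exact ⟨k, l, hk1, hkl, hlm, hlk, by omega, by omega⟩

lemma ccv_pair {a b : ℕ → ℕ} {m : ℕ}
    (Da : ∀ i j, 1 ≤ i → i ≤ j → j + 1 ≤ m → a i + a (j+1) ≤ a (i+1) + a j)
    (Db : ∀ i j, 1 ≤ i → i ≤ j → j + 1 ≤ m → b i + b (j+1) ≤ b (i+1) + b j) :
    ∀ (n i j : ℕ), 1 ≤ i → i ≤ j → j ≤ m → i ≤ n →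
      ∃ k l, 1 ≤ k ∧ k ≤ l ∧ l ≤ m ∧ (k = 1 ∨ l = m) ∧
        a k + a l ≤ a i + a j ∧ b k + b l ≤ b i + b j := by
  intro n
  induction n with
  | zero => intro i j h1 _ _ hn; omega
  | succ n IH =>
    intro i j h1 hij hjm hn
    by_cases hi1 : i = 1
    · subst hi1
      exact ⟨1, j, le_refl _, by omega, hjm, Or.inl rfl, le_refl _, le_refl _⟩
    by_cases hjm' : j = m
    · exact ⟨i, j, h1, hij, hjm, Or.inr hjm', le_refl _, le_refl _⟩
    · have hi : i - 1 + 1 = i := by omega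
      obtain ⟨k, l, hk1, hkl, hlm, hor, hha, hhb⟩ :=
        IH (i-1) (j+1) (by omega) (by omega) (by omega) (by omega)
      have sa : a (i-1) + a (j+1) ≤ a i + a j := by
        have := Da (i-1) j (by omega) (by omega) (by omega)
        rwa [hi] at this
      have sb : b (i-1) + b (j+1) ≤ b i + b j := by
        have := Db (i-1) j (by omega) (by omega) (by omega)
        rwa [hi] at this
      exact ⟨k, l, hk1, hkl, hlm, hor, by omega, by omega⟩

lemma Pcx_strict_anti {c : ℕ → ℕ} {m : ℕ}
    (h : ∀ i, 1 ≤ i → i < m → c (i+1) < c i) :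
    ∀ s, 2 ≤ s → s < 2*m → c ((s+1)/2) + c ((s+1+1)/2) < c (s/2) + c ((s+1)/2) := by
  intro s h2 hs
  rcases Nat.even_or_odd s with ⟨i, hi⟩ | ⟨i, hi⟩
  · have e1 : s/2 = i := by omega
    have e2 : (s+1)/2 = i := by omega
    have e3 : (s+1+1)/2 = i+1 := by omega
    rw [e1, e2, e3]
    have := h i (by omega) (by omega)
    omega
  · have e1 : s/2 = i := by omega
    have e2 : (s+1)/2 = i+1 := by omega
    have e3 : (s+1+1)/2 = i+1 := by omega
    rw [e1, e2, e3]
    have := h i (by omega) (by omega)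
    omega

lemma Pcx_strict_mono {c : ℕ → ℕ} {m : ℕ}
    (h : ∀ i, 1 ≤ i → i < m → c i < c (i+1)) :
    ∀ s, 2 ≤ s → s < 2*m → c (s/2) + c ((s+1)/2) < c ((s+1)/2) + c ((s+1+1)/2) := by
  intro s h2 hs
  rcases Nat.even_or_odd s with ⟨i, hi⟩ | ⟨i, hi⟩
  · have e1 : s/2 = i := by omega
    have e2 : (s+1)/2 = i := by omega
    have e3 : (s+1+1)/2 = i+1 := by omega
    rw [e1, e2, e3]
    have := h i (by omega) (by omega)
    omega
  · have e1 : s/2 = i := by omega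
    have e2 : (s+1)/2 = i+1 := by omega
    have e3 : (s+1+1)/2 = i+1 := by omega
    rw [e1, e2, e3]
    have := h i (by omega) (by omega)
    omega

lemma Pcv_strict_anti {c : ℕ → ℕ} {m : ℕ} (hm : 2 ≤ m)
    (h : ∀ i, 1 ≤ i → i < m → c (i+1) < c i) :
    ∀ s, 2 ≤ s → s < 2*m →
      (if s+1 ≤ m+1 then c 1 + c (s+1-1) else c (s+1-m) + c m) <
      (if s ≤ m+1 then c 1 + c (s-1) else c (s-m) + c m) := by
  intro s h2 hs
  by_cases h1 : s + 1 ≤ m + 1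
  · rw [if_pos h1, if_pos (by omega)]
    have h4 := h (s-1) (by omega) (by omega)
    have e : s - 1 + 1 = s := by omega
    rw [e] at h4
    have e2 : s + 1 - 1 = s := by omega
    rw [e2]
    omega
  · by_cases h3 : s ≤ m + 1
    · rw [if_neg h1, if_pos h3]
      have h4 := h 1 (le_refl _) (by omega)
      have e0 : (1:ℕ) + 1 = 2 := rfl
      rw [e0] at h4
      have e : s + 1 - m = 2 := by omega
      have e2 : s - 1 = m := by omega
      rw [e, e2]
      omega
    · rw [if_neg h1, if_neg h3]
      have h4 := h (s-m) (by omega) (by omega)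
      have e : s + 1 - m = (s-m) + 1 := by omega
      rw [e]
      omega

lemma Pcv_strict_mono {c : ℕ → ℕ} {m : ℕ} (hm : 2 ≤ m)
    (h : ∀ i, 1 ≤ i → i < m → c i < c (i+1)) :
    ∀ s, 2 ≤ s → s < 2*m →
      (if s ≤ m+1 then c 1 + c (s-1) else c (s-m) + c m) <
      (if s+1 ≤ m+1 then c 1 + c (s+1-1) else c (s+1-m) + c m) := by
  intro s h2 hs
  by_cases h1 : s + 1 ≤ m + 1
  · rw [if_pos h1, if_pos (by omega)]
    have h4 := h (s-1) (by omega) (by omega)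
    have e : s - 1 + 1 = s := by omega
    rw [e] at h4
    have e2 : s + 1 - 1 = s := by omega
    rw [e2]
    omega
  · by_cases h3 : s ≤ m + 1
    · rw [if_neg h1, if_pos h3]
      have h4 := h 1 (le_refl _) (by omega)
      have e0 : (1:ℕ) + 1 = 2 := rfl
      rw [e0] at h4
      have e : s + 1 - m = 2 := by omega
      have e2 : s - 1 = m := by omega
      rw [e, e2]
      omega
    · rw [if_neg h1, if_neg h3]
      have h4 := h (s-m) (by omega) (by omega)
      have e : s + 1 - m = (s-m) + 1 := by omega
      rw [e]
      omega


section General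

variable {K : Type*} [Field K] {n : ℕ}

lemma monomial_mem_span_iff (T : Set (Fin n →₀ ℕ)) (w : Fin n →₀ ℕ) :
    monomial w (1:K) ∈ Ideal.span ((fun v => monomial v (1:K)) '' T) ↔ ∃ t ∈ T, t ≤ w := by
  rw [mem_ideal_span_monomial_image]
  simp [support_monomial]

lemma minMonGenSet_eq (M T : Set (Fin n →₀ ℕ)) (hMT : M ⊆ T)
    (hdom : ∀ t ∈ T, ∃ s ∈ M, s ≤ t)
    (hanti : ∀ s ∈ M, ∀ s' ∈ M, s ≤ s' → s = s') :
    MinMonGenSet (Ideal.span ((fun v => monomial v (1:K)) '' T)) =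
      (fun v => monomial v (1:K)) '' M := by
  ext p
  constructor
  · rintro ⟨v, rfl, hv, hmin⟩
    obtain ⟨t, htT, htv⟩ := (monomial_mem_span_iff T v).1 hv
    obtain ⟨g, hgM, hgt⟩ := hdom t htT
    have hgv : g ≤ v := le_trans hgt htv
    by_cases hgv' : g = v
    · exact ⟨v, hgv' ▸ hgM, rfl⟩
    · exact absurd ((monomial_mem_span_iff T g).2 ⟨g, hMT hgM, le_refl g⟩)
        (hmin g hgv hgv')
  · rintro ⟨v, hvM, rfl⟩
    refine ⟨v, rfl, (monomial_mem_span_iff T v).2 ⟨v, hMT hvM, le_refl v⟩, ?_⟩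
    intro w hwv hne hw
    obtain ⟨t, htT, htw⟩ := (monomial_mem_span_iff T w).1 hw
    obtain ⟨g, hgM, hgt⟩ := hdom t htT
    have := hanti g hgM v hvM (le_trans hgt (le_trans htw hwv))
    exact hne (le_antisymm hwv (this ▸ le_trans hgt htw))

lemma coeff_mul_of_min {M T : Set (Fin n →₀ ℕ)}
    (hdom : ∀ t ∈ T, ∃ s ∈ M, s ≤ t)
    (hanti : ∀ s ∈ M, ∀ s' ∈ M, s ≤ s' → s = s')
    {w : Fin n →₀ ℕ} (hw : w ∈ M) (p f : MvPolynomial (Fin n) K)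
    (hf : f ∈ Ideal.span ((fun v => monomial v (1:K)) '' T)) :
    coeff w (p * f) = coeff 0 p * coeff w f := by
  rw [coeff_mul]
  apply Finset.sum_eq_single (0, w)
  · rintro ⟨x, y⟩ hxy hne
    rw [Finset.HasAntidiagonal.mem_antidiagonal] at hxy
    by_cases hy : coeff y f = 0
    · simp [hy]
    · exfalso
      have hysupp : y ∈ f.support := mem_support_iff.2 hy
      obtain ⟨t, htT, hty⟩ := mem_ideal_span_monomial_image.1 hf y hysupp
      obtain ⟨g, hgM, hgt⟩ := hdom t htT
      have hyw : y ≤ w := hxy ▸ le_add_self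
      have := hanti g hgM w hw (le_trans hgt (le_trans hty hyw))
      have hyw' : y = w := le_antisymm hyw (this ▸ le_trans hgt hty)
      subst hyw'
      apply hne
      have hx0 : x = 0 := by
        have : x + y = y := hxy
        simpa using add_eq_right.1 this
      simp [hx0]
  · intro h
    exact absurd (Finset.HasAntidiagonal.mem_antidiagonal.2 (zero_add w)) h

end General

section G2
variable {K : Type*} [Field K] {n : ℕ}

lemma mu_span_monomials (M : Finset (Fin n →₀ ℕ)) (T : Set (Fin n →₀ ℕ))
    (hMT : (M : Set (Fin n →₀ ℕ)) ⊆ T)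
    (hdom : ∀ t ∈ T, ∃ s ∈ (M : Set (Fin n →₀ ℕ)), s ≤ t)
    (hanti : ∀ s ∈ (M : Set (Fin n →₀ ℕ)), ∀ s' ∈ (M : Set (Fin n →₀ ℕ)), s ≤ s' → s = s') :
    mu (Ideal.span ((fun v => monomial v (1:K)) '' T)) = M.card := by
  classical
  set I := Ideal.span ((fun v => monomial v (1:K)) '' T) with hIdef
  have hspanM : Ideal.span ((M.image (fun v => monomial v (1:K)) : Finset _) :
      Set (MvPolynomial (Fin n) K)) = I := by
    rw [Finset.coe_image]
    apply le_antisymm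
    · rw [Ideal.span_le]
      rintro _ ⟨v, hv, rfl⟩
      exact (monomial_mem_span_iff T v).2 ⟨v, hMT hv, le_refl v⟩
    · rw [hIdef, Ideal.span_le]
      rintro _ ⟨v, hv, rfl⟩
      exact (monomial_mem_span_iff (M : Set (Fin n →₀ ℕ)) v).2 (hdom v hv)
  have hmem : (M.image (fun v => monomial v (1:K))).card ∈
      {k | ∃ s : Finset (MvPolynomial (Fin n) K), s.card = k ∧ Ideal.span (s : Set _) = I} :=
    ⟨_, rfl, hspanM⟩
  have hub : mu I ≤ M.card :=
    le_trans (Nat.sInf_le hmem) Finset.card_image_le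
  refine le_antisymm hub (le_csInf ⟨_, hmem⟩ ?_)
  rintro k ⟨s, rfl, hs⟩
  set φ : MvPolynomial (Fin n) K →ₗ[K] (↥M → K) :=
    LinearMap.pi (fun v : ↥M => lcoeff K (v : Fin n →₀ ℕ)) with hφ
  have hφapp : ∀ (f : MvPolynomial (Fin n) K) (w : ↥M), φ f w = coeff (w : Fin n →₀ ℕ) f := by
    intro f w; rfl
  have hsingle : ∀ v : ↥M, Pi.single v (1:K) ∈ Submodule.span K (φ '' (s : Set _)) := by
    intro v
    have hvI : monomial (v : Fin n →₀ ℕ) (1:K) ∈ I :=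
      (monomial_mem_span_iff T _).2 ⟨v, hMT v.2, le_refl _⟩
    rw [← hs] at hvI
    obtain ⟨c, -, hc⟩ := Submodule.mem_span_finset.1 hvI
    have key : Pi.single v (1:K) = ∑ f ∈ s, coeff 0 (c f) • φ f := by
      funext w
      have hw : ∀ f ∈ s, coeff (w : Fin n →₀ ℕ) (c f * f)
          = coeff 0 (c f) * coeff (w : Fin n →₀ ℕ) f := by
        intro f hf
        refine coeff_mul_of_min hdom hanti w.2 (c f) f ?_
        have : f ∈ Ideal.span (s : Set (MvPolynomial (Fin n) K)) := Ideal.subset_span hf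
        rwa [hs, hIdef] at this
      have e1 : (Pi.single v (1:K) : ↥M → K) w
          = coeff (w : Fin n →₀ ℕ) (monomial (v : Fin n →₀ ℕ) (1:K)) := by
        rw [Pi.single_apply, coeff_monomial]; exact if_congr (Subtype.ext_iff.trans eq_comm) rfl rfl
      rw [e1, ← hc, MvPolynomial.coeff_sum, Finset.sum_apply]
      exact Finset.sum_congr rfl fun f hf => by
        simp [smul_eq_mul, hw f hf, hφapp]
    rw [key]
    exact Submodule.sum_mem _ fun f hf =>
      Submodule.smul_mem _ _ (Submodule.subset_span ⟨f, hf, rfl⟩)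
  have htop : Submodule.span K (φ '' (s : Set _)) = ⊤ := by
    rw [eq_top_iff]
    intro x _
    rw [pi_eq_sum_univ x]
    refine Submodule.sum_mem _ fun i _ => Submodule.smul_mem _ _ ?_
    have : (fun j => if i = j then (1:K) else 0) = Pi.single i 1 := by
      funext j; simp [Pi.single_apply, eq_comm]
    rw [this]
    exact hsingle i
  calc M.card = Module.finrank K (↥M → K) := by
        simp [Module.finrank_fintype_fun_eq_card, Fintype.card_coe]
    _ = Module.finrank K (⊤ : Submodule K (↥M → K)) := (finrank_top _ _).symm
    _ = Module.finrank K (Submodule.span K (φ '' (s : Set _))) := by rw [htop]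
    _ = Module.finrank K (Submodule.span K ((s.image φ : Finset _) : Set (↥M → K))) := by
        rw [Finset.coe_image]
    _ ≤ (s.image φ).card := finrank_span_finset_le_card _
    _ ≤ s.card := Finset.card_image_le

end G2

/-- Main abstract case lemma: a monomial ideal generated by `T2`, dominated by an
antichain chain `w s`, `s ∈ [lo, hi]`, with strictly decreasing first coordinate and
strictly increasing second coordinate. -/
lemma main_case {K : Type*} [Field K] {lo hi : ℕ}
    (T2 : Set (Fin 2 →₀ ℕ)) (w : ℕ → Fin 2 →₀ ℕ) (P Q : ℕ → ℕ)
    (hwPQ : ∀ s, lo ≤ s → s ≤ hi → w s = sgl (P s) (Q s))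
    (hP : ∀ s, lo ≤ s → s < hi → P (s+1) < P s)
    (hQ : ∀ s, lo ≤ s → s < hi → Q s < Q (s+1))
    (hMT : ∀ s, lo ≤ s → s ≤ hi → w s ∈ T2)
    (hdom : ∀ t ∈ T2, ∃ s, lo ≤ s ∧ s ≤ hi ∧ w s ≤ t) :
    mu (Ideal.span ((fun x => monomial x (1:K)) '' T2)) = hi + 1 - lo ∧
    MinMonGenSet (Ideal.span ((fun x => monomial x (1:K)) '' T2)) =
      (fun x => monomial x (1:K)) '' (w '' Set.Icc lo hi) := by
  classical
  have hMeq : w '' Set.Icc lo hi = (fun s => sgl (P s) (Q s)) '' Set.Icc lo hi :=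
    Set.image_congr fun s hs => hwPQ s hs.1 hs.2
  have hanti : ∀ x ∈ w '' Set.Icc lo hi, ∀ y ∈ w '' Set.Icc lo hi, x ≤ y → x = y := by
    rw [hMeq]
    rintro _ ⟨s, hs, rfl⟩ _ ⟨t, ht, rfl⟩ hle
    obtain ⟨hPle, hQle⟩ := sgl_le_iff.1 hle
    rcases lt_trichotomy s t with h | h | h
    · exact absurd hPle (not_le.2 (strictAnti_of_adj hP s t hs.1 h ht.2))
    · rw [h]
    · exact absurd hQle (not_le.2 (strictMono_of_adj hQ t s ht.1 h hs.2))
  have hsub : w '' Set.Icc lo hi ⊆ T2 := by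
    rintro _ ⟨s, hs, rfl⟩
    exact hMT s hs.1 hs.2
  have hdom' : ∀ t ∈ T2, ∃ x ∈ w '' Set.Icc lo hi, x ≤ t := by
    intro t ht
    obtain ⟨s, h1, h2, h3⟩ := hdom t ht
    exact ⟨w s, ⟨s, ⟨h1, h2⟩, rfl⟩, h3⟩
  constructor
  · have hcoe : (((Finset.Icc lo hi).image w : Finset (Fin 2 →₀ ℕ)) : Set (Fin 2 →₀ ℕ))
        = w '' Set.Icc lo hi := by
      rw [Finset.coe_image, Finset.coe_Icc]
    have := mu_span_monomials (K := K) ((Finset.Icc lo hi).image w) T2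
      (by rw [hcoe]; exact hsub) (by rw [hcoe]; exact hdom') (by rw [hcoe]; exact hanti)
    rw [this, Finset.card_image_of_injOn, Nat.card_Icc]
    intro s hs t ht h
    rw [Finset.coe_Icc, Set.mem_Icc] at hs ht
    rw [hwPQ s hs.1 hs.2, hwPQ t ht.1 ht.2] at h
    have hPst := (sgl_inj h).1
    rcases lt_trichotomy s t with hlt | he | hlt
    · exact absurd hPst (ne_of_gt (strictAnti_of_adj hP s t hs.1 hlt ht.2))
    · exact he
    · exact absurd hPst (ne_of_lt (strictAnti_of_adj hP t s ht.1 hlt hs.2))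
  · exact minMonGenSet_eq _ T2 hsub hdom' hanti

/-- Proposition 4.2: let `m ≥ 2`, `a₁ > a₂ > … > a_m = 0`, `0 = b₁ < b₂ < … < b_m`, and let
`I ⊂ K[x,y]` be the monomial ideal minimally generated by `uᵢ = x^{aᵢ} y^{bᵢ}`, `i = 1,…,m`.
If the sequences `(aᵢ)` and `(bᵢ)` are both convex or both concave, then
`μ(I²) = 2μ(I) - 1`; more precisely, in the concave case the minimal monomial generating set
of `I²` is `{u₁², …, u_m², u₁u₂, …, u_{m-1}u_m}` and in the convex case it is
`{u₁², u₁u₂, …, u₁u_m, u₂u_m, …, u_m²}`. -/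
theorem numGen_square_of_convex_or_concave {K : Type*} [Field K]
    (m : ℕ) (hm : 2 ≤ m) (a b : ℕ → ℕ)
    (ha : ∀ i, 1 ≤ i → i < m → a (i + 1) < a i) (ham : a m = 0)
    (hb1 : b 1 = 0) (hb : ∀ i, 1 ≤ i → i < m → b i < b (i + 1))
    (u : ℕ → MvPolynomial (Fin 2) K)
    (hu : ∀ i, u i = X 0 ^ a i * X 1 ^ b i)
    (I : Ideal (MvPolynomial (Fin 2) K))
    (hI : I = Ideal.span (u '' Set.Icc 1 m))
    (hcc : (∀ i, 2 ≤ i → i ≤ m - 1 → a (i - 1) + a (i + 1) ≤ 2 * a i ∧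
              b (i - 1) + b (i + 1) ≤ 2 * b i) ∨
           (∀ i, 2 ≤ i → i ≤ m - 1 → 2 * a i ≤ a (i - 1) + a (i + 1) ∧
              2 * b i ≤ b (i - 1) + b (i + 1))) :
    mu (I ^ 2) = 2 * mu I - 1 ∧
    ((∀ i, 2 ≤ i → i ≤ m - 1 → 2 * a i ≤ a (i - 1) + a (i + 1) ∧
        2 * b i ≤ b (i - 1) + b (i + 1)) →
      MinMonGenSet (I ^ 2) =
        ((fun i => u i * u i) '' Set.Icc 1 m) ∪ ((fun i => u i * u (i + 1)) '' Set.Icc 1 (m - 1))) ∧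
    ((∀ i, 2 ≤ i → i ≤ m - 1 → a (i - 1) + a (i + 1) ≤ 2 * a i ∧
        b (i - 1) + b (i + 1) ≤ 2 * b i) →
      MinMonGenSet (I ^ 2) =
        ((fun j => u 1 * u j) '' Set.Icc 1 m) ∪ ((fun i => u i * u m) '' Set.Icc 1 m)) := by
  classical
  set v : ℕ → (Fin 2 →₀ ℕ) := fun i => sgl (a i) (b i) with hv
  have hu' : ∀ i, u i = monomial (v i) (1:K) := by
    intro i
    rw [hu i, X_pow_eq_monomial, X_pow_eq_monomial, monomial_mul, one_mul, hv]
    rfl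
  have huu : ∀ i j, u i * u j = monomial (v i + v j) (1:K) := by
    intro i j
    rw [hu' i, hu' j, monomial_mul, one_mul]
  have hI' : I = Ideal.span ((fun x => monomial x (1:K)) '' (v '' Set.Icc 1 m)) := by
    rw [hI, Set.image_image]
    congr 1
    exact Set.image_congr fun i _ => hu' i
  have aS := strictAnti_of_adj (lo := 1) (hi := m) ha
  have bS := strictMono_of_adj (lo := 1) (hi := m) hb
  have vanti : ∀ x ∈ v '' Set.Icc 1 m, ∀ y ∈ v '' Set.Icc 1 m, x ≤ y → x = y := by
    rintro _ ⟨i, hi, rfl⟩ _ ⟨j, hj, rfl⟩ hle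
    rw [hv] at hle ⊢
    obtain ⟨h1, h2⟩ := sgl_le_iff.1 hle
    rcases lt_trichotomy i j with h | h | h
    · exact absurd h1 (not_le.2 (aS i j hi.1 h hj.2))
    · rw [h]
    · exact absurd h2 (not_le.2 (bS j i hj.1 h hi.2))
  have hmuI : mu I = m := by
    rw [hI']
    have hcoe : (((Finset.Icc 1 m).image v : Finset (Fin 2 →₀ ℕ)) : Set (Fin 2 →₀ ℕ))
        = v '' Set.Icc 1 m := by
      rw [Finset.coe_image, Finset.coe_Icc]
    have h2 := mu_span_monomials (K := K) ((Finset.Icc 1 m).image v) (v '' Set.Icc 1 m)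
      (by rw [hcoe])
      (by rw [hcoe]; rintro _ ⟨i, hi, rfl⟩; exact ⟨v i, ⟨i, hi, rfl⟩, le_refl _⟩)
      (by rw [hcoe]; exact vanti)
    rw [h2, Finset.card_image_of_injOn, Nat.card_Icc]
    · omega
    · intro i hi j hj hij
      rw [Finset.coe_Icc, Set.mem_Icc] at hi hj
      rcases lt_trichotomy i j with h | h | h
      · exfalso
        have := aS i j hi.1 h hj.2
        have h1 := congrArg (fun f : Fin 2 →₀ ℕ => f 0) hij
        simp only [hv, sgl, Finsupp.add_apply, Finsupp.single_apply] at h1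
        simp at h1
        omega
      · exact h
      · exfalso
        have := aS j i hj.1 h hi.2
        have h1 := congrArg (fun f : Fin 2 →₀ ℕ => f 0) hij
        simp only [hv, sgl, Finsupp.add_apply, Finsupp.single_apply] at h1
        simp at h1
        omega
  set T2 : Set (Fin 2 →₀ ℕ) :=
    Set.image2 (fun i j => v i + v j) (Set.Icc 1 m) (Set.Icc 1 m) with hT2
  have hI2 : I ^ 2 = Ideal.span ((fun x => monomial x (1:K)) '' T2) := by
    rw [hI', pow_two, Ideal.span_mul_span']
    congr 1
    rw [← Set.image2_mul, Set.image2_image_left, Set.image2_image_left,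
      Set.image2_image_right, Set.image2_image_right, hT2, Set.image_image2]
    exact Set.image2_congr fun x _ y _ => by rw [monomial_mul, one_mul]
  have convex_main : (∀ i, 2 ≤ i → i ≤ m - 1 → 2 * a i ≤ a (i - 1) + a (i + 1) ∧
        2 * b i ≤ b (i - 1) + b (i + 1)) →
      mu (I ^ 2) = 2 * m - 1 ∧
      MinMonGenSet (I ^ 2) =
        (fun x => monomial x (1:K)) '' ((fun s => v (s/2) + v ((s+1)/2)) '' Set.Icc 2 (2*m)) := by
    intro hc
    have Da := diff_mono (m := m) (c := a) (fun i h2 hi => (hc i h2 (by omega)).1)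
    have Db := diff_mono (m := m) (c := b) (fun i h2 hi => (hc i h2 (by omega)).2)
    have hcore : ∀ i j, 1 ≤ i → i ≤ j → j ≤ m →
        ∃ s, 2 ≤ s ∧ s ≤ 2*m ∧ v (s/2) + v ((s+1)/2) ≤ v i + v j := by
      intro i j h1 hij hjm
      obtain ⟨k, l, hk1, hkl, hlm, hlk, hha, hhb⟩ := cvx_pair Da Db j i j h1 hij hjm (by omega)
      refine ⟨k + l, by omega, by omega, ?_⟩
      have e1 : (k+l)/2 = k := by omega
      have e2 : (k+l+1)/2 = l := by omega
      rw [e1, e2]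
      simp only [hv]
      rw [sgl_add, sgl_add, sgl_le_iff]
      exact ⟨hha, hhb⟩
    obtain ⟨h1, h2⟩ := main_case (K := K) (lo := 2) (hi := 2*m) T2
      (fun s => v (s/2) + v ((s+1)/2))
      (fun s => a (s/2) + a ((s+1)/2)) (fun s => b (s/2) + b ((s+1)/2))
      (fun s _ _ => by simp only [hv]; rw [sgl_add])
      (fun s hs2 hs => Pcx_strict_anti ha s hs2 hs)
      (fun s hs2 hs => Pcx_strict_mono hb s hs2 hs)
      (fun s hs2 hsm => by
        rw [hT2]
        exact Set.mem_image2.2 ⟨s/2, Set.mem_Icc.2 ⟨by omega, by omega⟩,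
          (s+1)/2, Set.mem_Icc.2 ⟨by omega, by omega⟩, rfl⟩)
      (by
        rw [hT2]
        rintro _ ⟨i, hi, j, hj, rfl⟩
        rw [Set.mem_Icc] at hi hj
        rcases le_total i j with hij | hij
        · exact hcore i j hi.1 hij hj.2
        · obtain ⟨s, hs1, hs2, hs3⟩ := hcore j i hj.1 hij hi.2
          refine ⟨s, hs1, hs2, ?_⟩
          show v (s/2) + v ((s+1)/2) ≤ v i + v j
          rwa [add_comm (v i) (v j)])
    rw [← hI2] at h1 h2
    exact ⟨h1.trans (by omega), h2⟩
  have cx_union : (fun x => monomial x (1:K)) ''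
        ((fun s => v (s/2) + v ((s+1)/2)) '' Set.Icc 2 (2*m)) =
      ((fun i => u i * u i) '' Set.Icc 1 m) ∪
        ((fun i => u i * u (i+1)) '' Set.Icc 1 (m-1)) := by
    rw [Set.image_image]
    ext x
    simp only [Set.mem_image, Set.mem_union, Set.mem_Icc]
    constructor
    · rintro ⟨s, ⟨h2, h2m⟩, rfl⟩
      rcases Nat.even_or_odd s with ⟨i, hi⟩ | ⟨i, hi⟩
      · left
        refine ⟨i, ⟨by omega, by omega⟩, ?_⟩
        rw [huu i i]
        have e1 : s/2 = i := by omega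
        have e2 : (s+1)/2 = i := by omega
        rw [e1, e2]
      · right
        refine ⟨i, ⟨by omega, by omega⟩, ?_⟩
        rw [huu i (i+1)]
        have e1 : s/2 = i := by omega
        have e2 : (s+1)/2 = i+1 := by omega
        rw [e1, e2]
    · rintro (⟨i, ⟨hi1, him⟩, rfl⟩ | ⟨i, ⟨hi1, him⟩, rfl⟩)
      · refine ⟨2*i, ⟨by omega, by omega⟩, ?_⟩
        rw [huu i i]
        have e1 : (2*i)/2 = i := by omega
        have e2 : (2*i+1)/2 = i := by omega
        rw [e1, e2]
      · refine ⟨2*i+1, ⟨by omega, by omega⟩, ?_⟩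
        rw [huu i (i+1)]
        have e1 : (2*i+1)/2 = i := by omega
        have e2 : (2*i+1+1)/2 = i+1 := by omega
        rw [e1, e2]
  have concave_main : (∀ i, 2 ≤ i → i ≤ m - 1 → a (i - 1) + a (i + 1) ≤ 2 * a i ∧
        b (i - 1) + b (i + 1) ≤ 2 * b i) →
      mu (I ^ 2) = 2 * m - 1 ∧
      MinMonGenSet (I ^ 2) =
        (fun x => monomial x (1:K)) ''
          ((fun s => if s ≤ m+1 then v 1 + v (s-1) else v (s-m) + v m) '' Set.Icc 2 (2*m)) := by
    intro hc
    have Da := diff_anti (m := m) (c := a) (fun i h2 hi => (hc i h2 (by omega)).1)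
    have Db := diff_anti (m := m) (c := b) (fun i h2 hi => (hc i h2 (by omega)).2)
    have hcore : ∀ i j, 1 ≤ i → i ≤ j → j ≤ m →
        ∃ s, 2 ≤ s ∧ s ≤ 2*m ∧
          (if s ≤ m+1 then v 1 + v (s-1) else v (s-m) + v m) ≤ v i + v j := by
      intro i j h1 hij hjm
      obtain ⟨k, l, hk1, hkl, hlm, hor, hha, hhb⟩ := ccv_pair Da Db i i j h1 hij hjm (le_refl i)
      by_cases hk : k = 1
      · subst hk
        refine ⟨l + 1, by omega, by omega, ?_⟩
        rw [if_pos (by omega : l + 1 ≤ m + 1)]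
        have e : l + 1 - 1 = l := by omega
        rw [e]
        simp only [hv]
        rw [sgl_add, sgl_add, sgl_le_iff]
        exact ⟨hha, hhb⟩
      · have hl : l = m := hor.resolve_left hk
        rw [hl] at hha hhb
        refine ⟨k + m, by omega, by omega, ?_⟩
        rw [if_neg (by omega : ¬ (k + m ≤ m + 1))]
        have e : k + m - m = k := by omega
        rw [e]
        simp only [hv]
        rw [sgl_add, sgl_add, sgl_le_iff]
        exact ⟨hha, hhb⟩
    obtain ⟨h1, h2⟩ := main_case (K := K) (lo := 2) (hi := 2*m) T2
      (fun s => if s ≤ m+1 then v 1 + v (s-1) else v (s-m) + v m)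
      (fun s => if s ≤ m+1 then a 1 + a (s-1) else a (s-m) + a m)
      (fun s => if s ≤ m+1 then b 1 + b (s-1) else b (s-m) + b m)
      (fun s _ _ => by
        show (if s ≤ m+1 then v 1 + v (s-1) else v (s-m) + v m)
          = sgl (if s ≤ m+1 then a 1 + a (s-1) else a (s-m) + a m)
              (if s ≤ m+1 then b 1 + b (s-1) else b (s-m) + b m)
        by_cases hs : s ≤ m + 1
        · rw [if_pos hs, if_pos hs, if_pos hs]
          simp only [hv]
          rw [sgl_add]
        · rw [if_neg hs, if_neg hs, if_neg hs]
          simp only [hv]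
          rw [sgl_add])
      (fun s hs2 hs => Pcv_strict_anti hm ha s hs2 hs)
      (fun s hs2 hs => Pcv_strict_mono hm hb s hs2 hs)
      (fun s hs2 hsm => by
        rw [hT2]
        show (if s ≤ m+1 then v 1 + v (s-1) else v (s-m) + v m)
          ∈ Set.image2 (fun i j => v i + v j) (Set.Icc 1 m) (Set.Icc 1 m)
        by_cases hs : s ≤ m + 1
        · rw [if_pos hs]
          exact Set.mem_image2.2 ⟨1, Set.mem_Icc.2 ⟨by omega, by omega⟩,
            s - 1, Set.mem_Icc.2 ⟨by omega, by omega⟩, rfl⟩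
        · rw [if_neg hs]
          exact Set.mem_image2.2 ⟨s - m, Set.mem_Icc.2 ⟨by omega, by omega⟩,
            m, Set.mem_Icc.2 ⟨by omega, by omega⟩, rfl⟩)
      (by
        rw [hT2]
        rintro _ ⟨i, hi, j, hj, rfl⟩
        rw [Set.mem_Icc] at hi hj
        rcases le_total i j with hij | hij
        · exact hcore i j hi.1 hij hj.2
        · obtain ⟨s, hs1, hs2, hs3⟩ := hcore j i hj.1 hij hi.2
          refine ⟨s, hs1, hs2, ?_⟩
          show (if s ≤ m+1 then v 1 + v (s-1) else v (s-m) + v m) ≤ v i + v j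
          rwa [add_comm (v i) (v j)])
    rw [← hI2] at h1 h2
    exact ⟨h1.trans (by omega), h2⟩
  have cv_union : (fun x => monomial x (1:K)) ''
        ((fun s => if s ≤ m+1 then v 1 + v (s-1) else v (s-m) + v m) '' Set.Icc 2 (2*m)) =
      ((fun j => u 1 * u j) '' Set.Icc 1 m) ∪ ((fun i => u i * u m) '' Set.Icc 1 m) := by
    rw [Set.image_image]
    ext x
    simp only [Set.mem_image, Set.mem_union, Set.mem_Icc]
    constructor
    · rintro ⟨s, ⟨h2, h2m⟩, rfl⟩
      by_cases hs : s ≤ m + 1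
      · left
        refine ⟨s - 1, ⟨by omega, by omega⟩, ?_⟩
        rw [huu 1 (s-1), if_pos hs]
      · right
        refine ⟨s - m, ⟨by omega, by omega⟩, ?_⟩
        rw [huu (s-m) m, if_neg hs]
    · rintro (⟨j, ⟨hj1, hjm⟩, rfl⟩ | ⟨i, ⟨hi1, him⟩, rfl⟩)
      · refine ⟨j + 1, ⟨by omega, by omega⟩, ?_⟩
        rw [huu 1 j, if_pos (by omega : j + 1 ≤ m + 1)]
        have e : j + 1 - 1 = j := by omega
        rw [e]
      · by_cases hi : i = 1
        · subst hi
          refine ⟨m + 1, ⟨by omega, by omega⟩, ?_⟩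
          rw [huu 1 m, if_pos (by omega : m + 1 ≤ m + 1)]
          have e : m + 1 - 1 = m := by omega
          rw [e]
        · refine ⟨i + m, ⟨by omega, by omega⟩, ?_⟩
          rw [huu i m, if_neg (by omega : ¬ (i + m ≤ m + 1))]
          have e : i + m - m = i := by omega
          rw [e]
  refine ⟨?_, ?_, ?_⟩
  · rcases hcc with hcv | hcx
    · rw [hmuI]
      exact (concave_main hcv).1
    · rw [hmuI]
      exact (convex_main hcx).1
  · intro hcx
    rw [(convex_main hcx).2, cx_union]
  · intro hcv
    rw [(concave_main hcv).2, cv_union]
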